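/- Any family of 3-element subsets of {1,2,3,4,5} in which every two distinct members intersect in at least 2 elements has cardinality at most 4. -/
import Mathlib
open Finset

def triples : Fin 10 → Finset (Fin 5)
| 0 => {0,1,2} | 1 => {0,1,3} | 2 => {0,1,4} | 3 => {0,2,3} | 4 => {0,2,4}
| 5 => {0,3,4} | 6 => {1,2,3} | 7 => {1,2,4} | 8 => {1,3,4} | 9 => {2,3,4}

lemma triples_surj : ∀ S : Finset (Fin 5), S.card = 3 → ∃ i, triples i = S := by
  decide

lemma triples_inj : ∀ i j : Fin 10, triples i = triples j → i = j := by decide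

set_option maxRecDepth 10000 in
lemma boolLem : ∀ b0 b1 b2 b3 b4 b5 b6 b7 b8 b9 : Bool,
    (∀ i j : Fin 10, i ≠ j → ¬ (2 ≤ ((triples i) ∩ (triples j)).card) →
      ¬ ([b0,b1,b2,b3,b4,b5,b6,b7,b8,b9].get i ∧ [b0,b1,b2,b3,b4,b5,b6,b7,b8,b9].get j)) →
    b0.toNat + b1.toNat + b2.toNat + b3.toNat + b4.toNat + b5.toNat + b6.toNat + b7.toNat + b8.toNat + b9.toNat ≤ 4 := by
  decide

theorem stmt_5 (F : Finset (Finset (Fin 5))) (hcard : ∀ S ∈ F, S.card = 3)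
    (hint : ∀ S ∈ F, ∀ T ∈ F, S ≠ T → 2 ≤ (S ∩ T).card) :
    F.card ≤ 4 := by
  classical
  set b : Fin 10 → Bool := fun i => decide (triples i ∈ F) with hb
  have hget : ∀ k : Fin 10, ([b 0, b 1, b 2, b 3, b 4, b 5, b 6, b 7, b 8, b 9].get k) = b k := by
    intro k; fin_cases k <;> rfl
  have hcond : ∀ i j : Fin 10, i ≠ j → ¬ (2 ≤ ((triples i) ∩ (triples j)).card) →
      ¬ ([b 0, b 1, b 2, b 3, b 4, b 5, b 6, b 7, b 8, b 9].get i ∧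
         [b 0, b 1, b 2, b 3, b 4, b 5, b 6, b 7, b 8, b 9].get j) := by
    intro i j hij hbad h
    rw [hget, hget, hb] at h
    simp only [decide_eq_true_eq] at h
    exact hbad (hint _ h.1 _ h.2 (fun e => hij (triples_inj i j e)))
  have key := boolLem (b 0) (b 1) (b 2) (b 3) (b 4) (b 5) (b 6) (b 7) (b 8) (b 9) hcond
  have hF : F = (univ.filter (fun i => triples i ∈ F)).image triples := by
    ext S
    simp only [mem_image, mem_filter, mem_univ, true_and]
    constructor
    · intro hS
      obtain ⟨i, hi⟩ := triples_surj S (hcard S hS)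
      exact ⟨i, hi ▸ hS, hi⟩
    · rintro ⟨i, hi, rfl⟩; exact hi
  have hcardeq : F.card = (univ.filter (fun i => triples i ∈ F)).card := by
    conv_lhs => rw [hF]
    rw [card_image_of_injOn (fun i _ j _ e => triples_inj i j e)]
  have hite : ∀ (p : Prop) [Decidable p], (if p then 1 else 0 : ℕ) = (decide p).toNat := by
    intro p _; by_cases h : p <;> simp [h]
  rw [hcardeq, card_filter]
  simp only [Fin.sum_univ_succ, Fin.sum_univ_zero, hite, add_zero]
  simp only [hb] at key
  have key2 : (decide (triples 0 ∈ F)).toNat +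
      ((decide (triples 1 ∈ F)).toNat + ((decide (triples 2 ∈ F)).toNat +
      ((decide (triples 3 ∈ F)).toNat + ((decide (triples 4 ∈ F)).toNat +
      ((decide (triples 5 ∈ F)).toNat + ((decide (triples 6 ∈ F)).toNat +
      ((decide (triples 7 ∈ F)).toNat + ((decide (triples 8 ∈ F)).toNat +
      (decide (triples 9 ∈ F)).toNat)))))))) ≤ 4 := by omega
  exact key2
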